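/- Let x be a real number that has a signed digit representation, and let l be a finite list of integers, each of which lies in {-1, 0, 1}. Then the real number x · (∑_{i=1}^{length l} l_i / 2^i), where l_i denotes the i-th element of l, has a signed digit representation. -/

import Mathlib

/-- A real number has a signed digit representation if it is the sum of a
series of digits in {-1, 0, 1} weighted by powers of 1/2. -/
def HasSDR (x : ℝ) : Prop :=
  ∃ d : ℕ → ℤ, (∀ i, d i = -1 ∨ d i = 0 ∨ d i = 1) ∧
    x = ∑' i : ℕ, (d i : ℝ) / 2 ^ (i + 1)

lemma summable_half : Summable (fun i : ℕ => (1 : ℝ) / 2 ^ (i + 1)) := by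
  simpa [pow_succ, div_div, mul_comm, div_eq_mul_inv] using summable_geometric_two' 1

lemma tsum_half : ∑' i : ℕ, (1 : ℝ) / 2 ^ (i + 1) = 1 := by
  calc ∑' i : ℕ, (1 : ℝ) / 2 ^ (i + 1)
      = ∑' i : ℕ, (1 : ℝ) / 2 / 2 ^ i :=
        tsum_congr (fun n => by rw [pow_succ, div_div, mul_comm])
    _ = 1 := tsum_geometric_two' 1

lemma one_hasSDR : HasSDR 1 :=
  ⟨fun _ => 1, fun _ => Or.inr (Or.inr rfl), by
    rw [← tsum_half]; apply tsum_congr; intro n; norm_num⟩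

lemma hasSDR_of_abs_le (y : ℝ) (hy : |y| ≤ 1) : HasSDR y := by
  obtain ⟨hy1, hy2⟩ := abs_le.mp hy
  set t : ℝ := (y + 1) / 2 with ht
  have ht0 : 0 ≤ t := by simp only [ht]; linarith
  have ht1 : t ≤ 1 := by simp only [ht]; linarith
  rcases eq_or_lt_of_le ht1 with h1 | h1
  · have hyy : y = 1 := by
      have : (y + 1) / 2 = 1 := h1
      linarith
    rw [hyy]; exact one_hasSDR
  · set b : ℕ → ℤ := fun i => ⌊2 ^ (i + 1) * t⌋ - 2 * ⌊2 ^ i * t⌋ with hb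
    have hb01 : ∀ i, b i = 0 ∨ b i = 1 := by
      intro i
      have key : ∀ u : ℝ, 2 * ⌊u⌋ ≤ ⌊2 * u⌋ ∧ ⌊2 * u⌋ ≤ 2 * ⌊u⌋ + 1 := by
        intro u
        constructor
        · apply Int.le_floor.mpr
          push_cast
          nlinarith [Int.floor_le u]
        · have h0 := Int.lt_floor_add_one u
          have h2 := Int.floor_lt.mpr
            (by push_cast; linarith : (2:ℝ) * u < ((2 * ⌊u⌋ + 2 : ℤ) : ℝ))
          omega
      have hk := key (2 ^ i * t)
      have he : (2 : ℝ) ^ (i + 1) * t = 2 * (2 ^ i * t) := by ring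
      simp only [hb, he]
      omega
    have hble : ∀ i, (b i : ℝ) / 2 ^ (i + 1) ≤ 1 / 2 ^ (i + 1) := by
      intro i
      gcongr
      rcases hb01 i with h | h <;> simp [h]
    have hbnn : ∀ i, 0 ≤ (b i : ℝ) / 2 ^ (i + 1) := by
      intro i
      rcases hb01 i with h | h <;> simp [h]
    have hsumb : Summable (fun i => (b i : ℝ) / 2 ^ (i + 1)) :=
      Summable.of_nonneg_of_le hbnn hble summable_half
    have hpart : ∀ n, ∑ i ∈ Finset.range n, (b i : ℝ) / 2 ^ (i + 1)
        = (⌊2 ^ n * t⌋ : ℝ) / 2 ^ n := by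
      intro n
      have hts := Finset.sum_range_sub (f := fun n => (⌊2 ^ n * t⌋ : ℝ) / 2 ^ n) n
      have hterm : ∀ i : ℕ, (b i : ℝ) / 2 ^ (i + 1)
          = (⌊2 ^ (i + 1) * t⌋ : ℝ) / 2 ^ (i + 1) - (⌊2 ^ i * t⌋ : ℝ) / 2 ^ i := by
        intro i
        simp only [hb]
        push_cast
        field_simp
        ring
      have hf0 : (⌊2 ^ (0:ℕ) * t⌋ : ℝ) / 2 ^ (0:ℕ) = 0 := by
        have h0 : ⌊t⌋ = 0 := Int.floor_eq_zero_iff.mpr ⟨ht0, h1⟩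
        norm_num [h0]
      calc ∑ i ∈ Finset.range n, (b i : ℝ) / 2 ^ (i + 1)
          = ∑ i ∈ Finset.range n,
              ((⌊2 ^ (i+1) * t⌋ : ℝ) / 2 ^ (i+1) - (⌊2 ^ i * t⌋ : ℝ) / 2 ^ i) :=
            Finset.sum_congr rfl (fun i _ => hterm i)
        _ = (⌊2 ^ n * t⌋ : ℝ) / 2 ^ n - (⌊2 ^ (0:ℕ) * t⌋ : ℝ) / 2 ^ (0:ℕ) := hts
        _ = (⌊2 ^ n * t⌋ : ℝ) / 2 ^ n := by rw [hf0]; ring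
    have htend : Filter.Tendsto (fun n => ∑ i ∈ Finset.range n, (b i : ℝ) / 2 ^ (i + 1))
        Filter.atTop (nhds t) := by
      have hbound : ∀ n : ℕ, ‖(⌊2 ^ n * t⌋ : ℝ) / 2 ^ n - t‖ ≤ (1/2 : ℝ) ^ n := by
        intro n
        have h2n : (0:ℝ) < 2 ^ n := by positivity
        have hfl := Int.floor_le ((2:ℝ) ^ n * t)
        have hfl2 := Int.lt_floor_add_one ((2:ℝ) ^ n * t)
        have hinv : (1/2:ℝ) ^ n * 2 ^ n = 1 := by
          rw [← mul_pow]; norm_num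
        have hub : (⌊2 ^ n * t⌋ : ℝ) / 2 ^ n ≤ t :=
          (div_le_iff₀ h2n).mpr (by nlinarith)
        have hlb : t - (1/2:ℝ) ^ n ≤ (⌊2 ^ n * t⌋ : ℝ) / 2 ^ n :=
          (le_div_iff₀ h2n).mpr (by nlinarith)
        rw [Real.norm_eq_abs, abs_le]
        have hp : (0:ℝ) ≤ (1/2:ℝ) ^ n := by positivity
        constructor <;> linarith
      have h0 : Filter.Tendsto (fun n : ℕ => (1/2:ℝ) ^ n) Filter.atTop (nhds 0) :=
        tendsto_pow_atTop_nhds_zero_of_lt_one (by norm_num) (by norm_num)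
      have hz := squeeze_zero_norm hbound h0
      have := hz.add_const t
      simp only [sub_add_cancel, zero_add] at this
      simpa only [hpart] using this
    have htsumb : ∑' i, (b i : ℝ) / 2 ^ (i + 1) = t :=
      tendsto_nhds_unique hsumb.hasSum.tendsto_sum_nat htend
    refine ⟨fun i => 2 * b i - 1, ?_, ?_⟩
    · intro i; rcases hb01 i with h | h <;> simp [h]
    · have hterm : ∀ i : ℕ, ((2 * b i - 1 : ℤ) : ℝ) / 2 ^ (i + 1)
          = 2 * ((b i : ℝ) / 2 ^ (i + 1)) - 1 / 2 ^ (i + 1) := by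
        intro i; push_cast; ring
      rw [tsum_congr hterm, Summable.tsum_sub ((hsumb.mul_left 2)) summable_half,
        tsum_mul_left, htsumb, tsum_half]
      simp only [ht]; ring

theorem sdr_mult_sum (x : ℝ) (hx : HasSDR x) (l : List ℤ)
    (hl : ∀ a ∈ l, a = -1 ∨ a = 0 ∨ a = 1) :
    HasSDR (x * ∑ i ∈ Finset.range l.length, (l.getD i 0 : ℝ) / 2 ^ (i + 1)) := by
  obtain ⟨d, hd, hxd⟩ := hx
  have hdle : ∀ i, ‖(d i : ℝ) / 2 ^ (i + 1)‖ ≤ 1 / 2 ^ (i + 1) := by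
    intro i
    rw [Real.norm_eq_abs, abs_div, abs_of_nonneg (by positivity : (0:ℝ) ≤ 2 ^ (i+1))]
    gcongr
    rcases hd i with h | h | h <;> simp [h]
  have hnorm : Summable (fun i => ‖(d i : ℝ) / 2 ^ (i + 1)‖) :=
    Summable.of_nonneg_of_le (fun i => norm_nonneg _) hdle summable_half
  have hxsum : Summable (fun i => (d i : ℝ) / 2 ^ (i + 1)) :=
    hnorm.of_norm
  have hx1 : |x| ≤ 1 := by
    rw [hxd]
    calc |∑' i, (d i : ℝ) / 2 ^ (i + 1)| ≤ ∑' i, ‖(d i : ℝ) / 2 ^ (i + 1)‖ :=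
          norm_tsum_le_tsum_norm hnorm
      _ ≤ ∑' i, (1:ℝ) / 2 ^ (i + 1) := Summable.tsum_le_tsum hdle hnorm summable_half
      _ = 1 := tsum_half
  have hS1 : |∑ i ∈ Finset.range l.length, (l.getD i 0 : ℝ) / 2 ^ (i + 1)| ≤ 1 := by
    calc |∑ i ∈ Finset.range l.length, (l.getD i 0 : ℝ) / 2 ^ (i + 1)|
        ≤ ∑ i ∈ Finset.range l.length, |(l.getD i 0 : ℝ) / 2 ^ (i + 1)| :=
          Finset.abs_sum_le_sum_abs _ _
      _ ≤ ∑ i ∈ Finset.range l.length, (1:ℝ) / 2 ^ (i + 1) := by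
          apply Finset.sum_le_sum
          intro i hi
          have hi' := Finset.mem_range.mp hi
          have hmem : l.getD i 0 ∈ l := by
            rw [List.getD_eq_getElem l 0 hi']
            exact List.getElem_mem hi'
          have hval : |(l.getD i 0 : ℝ)| ≤ 1 := by
            rcases hl _ hmem with h | h | h <;> rw [h] <;> norm_num
          rw [abs_div, abs_of_nonneg (by positivity : (0:ℝ) ≤ 2 ^ (i+1))]
          gcongr
      _ ≤ ∑' i : ℕ, (1:ℝ) / 2 ^ (i + 1) :=
          Summable.sum_le_tsum _ (fun i _ => by positivity) summable_half
      _ = 1 := tsum_half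
  apply hasSDR_of_abs_le
  rw [abs_mul]
  exact mul_le_one₀ hx1 (abs_nonneg _) hS1
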